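/- For all complex numbers q and z with |q| < 1, (-zq;q)_∞ = 1 + ∑_{m=1}^{∞} [ ((-zq;q)_{m-1}/(q;q)_{m-1}) z^m q^{m(3m-1)/2} + ((-zq;q)_m/(q;q)_m) z^m q^{m(3m+1)/2} ]. -/

import Mathlib

open Finset Filter

/-- Gaussian binomial coefficient as a function of `q`. -/
def qb (q : ℂ) : ℕ → ℕ → ℂ
  | _, 0 => 1
  | 0, _+1 => 0
  | n+1, k+1 => qb q n k + q^(k+1) * qb q n (k+1)

@[simp] lemma qb_zero (q : ℂ) (n : ℕ) : qb q n 0 = 1 := by cases n <;> rfl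

@[simp] lemma qb_zero_succ (q : ℂ) (k : ℕ) : qb q 0 (k+1) = 0 := rfl

lemma qb_succ (q : ℂ) (n k : ℕ) :
    qb q (n+1) (k+1) = qb q n k + q^(k+1) * qb q n (k+1) := rfl

lemma qb_eq_zero (q : ℂ) : ∀ n k : ℕ, n < k → qb q n k = 0 := by
  intro n
  induction n with
  | zero => intro k hk; match k, hk with
    | k+1, _ => rfl
  | succ n ih =>
    intro k hk
    match k, hk with
    | k+1, hk =>
      rw [qb_succ, ih k (by omega), ih (k+1) (by omega)]
      ring

lemma pascal2 (q : ℂ) : ∀ n k : ℕ,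
    q^k * qb q (n+1) (k+1) = q^k * qb q n (k+1) + q^n * qb q n k := by
  intro n
  induction n with
  | zero =>
    intro k
    cases k with
    | zero => simp [qb_succ]
    | succ k => simp [qb_succ, qb_eq_zero q 0 (k+1) (by omega)]
  | succ n ih =>
    intro k
    cases k with
    | zero =>
      have h := ih 0
      have d1 : qb q (n+2) 1 = qb q (n+1) 0 + q^1 * qb q (n+1) 1 := qb_succ q (n+1) 0
      have d2 : qb q (n+1) 1 = qb q n 0 + q^1 * qb q n 1 := qb_succ q n 0
      simp only [qb_zero, pow_zero, one_mul] at h d1 d2 ⊢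
      linear_combination d1 - d2 + q * h
    | succ k =>
      have d1 : qb q (n+2) (k+2) = qb q (n+1) (k+1) + q^(k+2) * qb q (n+1) (k+2) :=
        qb_succ q (n+1) (k+1)
      have d2 : qb q (n+1) (k+2) = qb q n (k+1) + q^(k+2) * qb q n (k+2) := qb_succ q n (k+1)
      have d3 : qb q (n+1) (k+1) = qb q n k + q^(k+1) * qb q n (k+1) := qb_succ q n k
      linear_combination q^(k+1) * d1 - q^(k+1) * d2 - q^(n+1) * d3 + q * (ih k) + q^(k+2) * (ih (k+1))

lemma qb_self (q : ℂ) : ∀ n, qb q n n = 1 := by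
  intro n
  induction n with
  | zero => rfl
  | succ n ih => rw [qb_succ, ih, qb_eq_zero q n (n+1) (by omega)]; ring

/-- exponent `m(3m-1)/2` shifted: `e1 m = (m+1)(3m+2)/2`. -/
def e1 : ℕ → ℕ
  | 0 => 1
  | m+1 => e1 m + (3*m+4)

def e2 : ℕ → ℕ
  | 0 => 2
  | m+1 => e2 m + (3*m+5)

lemma e2_eq (m : ℕ) : e2 m = e1 m + (m+1) := by
  induction m with
  | zero => rfl
  | succ m ih => simp only [e1, e2, ih]; omega

lemma e1_spec (m : ℕ) : (m + 1) * (3 * (m + 1) - 1) / 2 = e1 m := by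
  induction m with
  | zero => rfl
  | succ m ih =>
    have h1 : (m + 1 + 1) * (3 * (m + 1 + 1) - 1) = (m+1) * (3*(m+1)-1) + 2 * (3*m+4) := by
      have : 3 * (m+1+1) - 1 = 3*m+5 := by omega
      rw [this]
      have : 3 * (m+1) - 1 = 3*m+2 := by omega
      rw [this]; ring
    rw [h1, Nat.add_mul_div_left _ _ (by norm_num : 0 < 2), ih, e1]

lemma e2_spec (m : ℕ) : (m + 1) * (3 * (m + 1) + 1) / 2 = e2 m := by
  induction m with
  | zero => rfl
  | succ m ih =>
    have h1 : (m + 1 + 1) * (3 * (m + 1 + 1) + 1) = (m+1) * (3*(m+1)+1) + 2 * (3*m+5) := by ring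
    rw [h1, Nat.add_mul_div_left _ _ (by norm_num : 0 < 2), ih, e2]

/-- partial products -/
def Pz (q z : ℂ) (n : ℕ) : ℂ := ∏ i ∈ Finset.range n, (1 + z * q^(i+1))

def Dz (q : ℂ) (n : ℕ) : ℂ := ∏ i ∈ Finset.range n, (1 - q^(i+1))

lemma qb_mul (q : ℂ) : ∀ r m : ℕ,
    qb q (m + r) m * Dz q m = ∏ i ∈ Finset.range m, (1 - q^(r+1+i)) := by
  intro r
  induction r with
  | zero =>
    intro m
    rw [Nat.add_zero, qb_self, one_mul, Dz]
    exact Finset.prod_congr rfl (fun i _ => by rw [Nat.zero_add, Nat.add_comm 1 i])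
  | succ r ih =>
    intro m
    induction m with
    | zero => simp [qb, Dz]
    | succ k ihk =>
      rw [show k + 1 + (r + 1) = (k+r+1)+1 from by omega, qb_succ,
        show Dz q (k+1) = Dz q k * (1 - q^(k+1)) from Finset.prod_range_succ _ _,
        Finset.prod_range_succ (fun i => (1 - q^(r+1+1+i)))]
      have h1 : qb q (k+r+1) k * Dz q k = ∏ i ∈ Finset.range k, (1 - q^(r+1+1+i)) := by
        rw [show k+r+1 = k+(r+1) from by omega]; exact ihk
      have h2 : qb q (k+r+1) (k+1) * (Dz q k * (1 - q^(k+1)))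
          = (1 - q^(r+1)) * ∏ i ∈ Finset.range k, (1 - q^(r+1+1+i)) := by
        have h := ih (k+1)
        rw [show k+1+r = k+r+1 from by omega,
          show Dz q (k+1) = Dz q k * (1 - q^(k+1)) from Finset.prod_range_succ _ _,
          Finset.prod_range_succ' (fun i => (1 - q^(r+1+i)))] at h
        have hconv : (∏ i ∈ Finset.range k, (1 - q^(r+1+(i+1))))
            = ∏ i ∈ Finset.range k, (1 - q^(r+1+1+i)) :=
          Finset.prod_congr rfl (fun i _ => by rw [show r+1+(i+1) = r+1+1+i from by omega])
        rw [h, hconv, Nat.add_zero, mul_comm]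
      linear_combination (1 - q^(k+1)) * h1 + q^(k+1) * h2

/-- Summand of the finite Sylvester identity. -/
def Tt (q z : ℂ) (m N : ℕ) : ℂ :=
  Pz q z m * qb q (N - (m+1)) m * z^(m+1) * q^(e1 m)
    + Pz q z (m+1) * qb q (N - (m+1)) (m+1) * z^(m+1) * q^(e2 m)

lemma Pz_succ (q z : ℂ) (n : ℕ) : Pz q z (n+1) = Pz q z n * (1 + z * q^(n+1)) :=
  Finset.prod_range_succ _ _

lemma step_term (q z : ℂ) (j s : ℕ) :
    Tt q z (j+1) (j+s+3) - Tt q z (j+1) (j+s+2)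
      = z*q^(j+s+3) * (Pz q z (j+1) * qb q s (j+1) * z^(j+2) * q^(e1 (j+1)))
      + z*q^(j+s+3) * (Pz q z (j+1) * qb q (s+1) (j+1) * z^(j+1) * q^(e2 j)) := by
  unfold Tt
  rw [show j+s+3-(j+1+1) = s+1 from by omega, show j+s+2-(j+1+1) = s from by omega]
  have h1 : qb q (s+1) (j+1) = qb q s j + q^(j+1) * qb q s (j+1) := qb_succ q s j
  have h3 := pascal2 q s j
  have h4 := pascal2 q s (j+1)
  rw [Pz_succ q z (j+1),
    show e1 (j+1) = e1 j + (3*j+4) from rfl,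
    show e2 (j+1) = e1 j + (4*j+6) from by rw [show e2 (j+1) = e2 j + (3*j+5) from rfl, e2_eq]; omega,
    show e2 j = e1 j + (j+1) from e2_eq j]
  linear_combination
    (-(q^s) * (Pz q z (j+1) * z^(j+2) * q^(e1 j + (2*j+4)))) * h1
    + (Pz q z (j+1) * z^(j+2) * q^(e1 j + (2*j+4))) * h3
    + (Pz q z (j+1) * (1 + z*q^(j+1+1)) * z^(j+2) * q^(e1 j + (3*j+5))) * h4

lemma step_term0 (q z : ℂ) (K : ℕ) :
    Tt q z 0 (K+2) - Tt q z 0 (K+1)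
      = z*q^(K+2) + z*q^(K+2) * (Pz q z 0 * qb q K 0 * z^(0+1) * q^(e1 0)) := by
  unfold Tt
  rw [show K+2-(0+1) = K+1 from by omega, show K+1-(0+1) = K from by omega]
  have h := pascal2 q K 0
  simp only [qb_zero, pow_zero, one_mul, mul_one] at h
  simp only [qb_zero, Pz, Finset.prod_range_zero, Finset.prod_range_one, zero_add, pow_one,
    one_mul, mul_one, show e1 0 = 1 from rfl, show e2 0 = 2 from rfl]
  linear_combination ((1 + z*q) * z * q^2) * h

lemma finite_syl (q z : ℂ) : ∀ N, Pz q z N = 1 + ∑ m ∈ Finset.range N, Tt q z m N := by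
  intro N
  induction N with
  | zero => simp [Pz]
  | succ N ih =>
    have hstep : ∑ m ∈ Finset.range (N+1), Tt q z m (N+1)
        = z*q^(N+1) + (∑ m ∈ Finset.range N, Tt q z m N)
          + z*q^(N+1) * (∑ m ∈ Finset.range N, Tt q z m N) := by
      cases N with
      | zero =>
        simp only [Finset.range_one, Finset.sum_singleton, Finset.range_zero, Finset.sum_empty,
          add_zero, mul_zero]
        unfold Tt
        simp [Pz, qb, show e1 0 = 1 from rfl, show e2 0 = 2 from rfl]
      | succ K =>
        -- peel last term of LHS
        rw [Finset.sum_range_succ (fun m => Tt q z m (K+2))]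
        have hlast : Tt q z (K+1) (K+2) = 0 := by
          unfold Tt
          rw [show K+2-(K+1+1) = 0 from by omega]
          simp [qb_eq_zero q 0 (K+1) (by omega), qb_eq_zero q 0 (K+2) (by omega)]
        rw [hlast, add_zero]
        have hsplit : ∑ m ∈ Finset.range (K+1), Tt q z m (K+2)
            = (∑ m ∈ Finset.range (K+1), Tt q z m (K+1))
              + ∑ m ∈ Finset.range (K+1), (Tt q z m (K+2) - Tt q z m (K+1)) := by
          rw [← Finset.sum_add_distrib]
          exact Finset.sum_congr rfl (fun m _ => by ring)
        rw [hsplit]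
        -- now reduce to the sum of differences
        have hdiff : ∑ m ∈ Finset.range (K+1), (Tt q z m (K+2) - Tt q z m (K+1))
            = z*q^(K+2) + z*q^(K+2) * (∑ m ∈ Finset.range (K+1), Tt q z m (K+1)) := by
          set Cc : ℕ → ℂ := fun m => z*q^(K+2) * (Pz q z m * qb q (K-m) m * z^(m+1) * q^(e1 m))
            with hCc
          set Dd : ℕ → ℂ := fun m => z*q^(K+2) * (Pz q z (m+1) * qb q (K-m) (m+1) * z^(m+1) * q^(e2 m))
            with hDd
          have hterm : ∀ m ∈ Finset.range (K+1), z*q^(K+2) * Tt q z m (K+1) = Cc m + Dd m := by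
            intro m _
            rw [hCc, hDd]
            unfold Tt
            rw [show K+1-(m+1) = K - m from by omega]
            ring
          rw [Finset.mul_sum, Finset.sum_congr rfl hterm, Finset.sum_add_distrib]
          rw [Finset.sum_range_succ' (fun m => Tt q z m (K+2) - Tt q z m (K+1))]
          rw [Finset.sum_range_succ' Cc, Finset.sum_range_succ Dd]
          have hDdK : Dd K = 0 := by
            rw [hDd]; simp [qb_eq_zero q 0 (K+1) (by omega)]
          have h0 : Tt q z 0 (K+2) - Tt q z 0 (K+1) = z*q^(K+2) + Cc 0 := by
            rw [step_term0, hCc]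
            norm_num
          have hj : ∀ j ∈ Finset.range K,
              Tt q z (j+1) (K+2) - Tt q z (j+1) (K+1) = Cc (j+1) + Dd j := by
            intro j hjK
            have hjK' : j < K := Finset.mem_range.1 hjK
            obtain ⟨s, rfl⟩ : ∃ s, K = j + s + 1 := ⟨K - j - 1, by omega⟩
            rw [hCc, hDd]
            simp only
            rw [show j+s+1+2 = j+s+3 from by omega, show j+s+1+1 = j+s+2 from by omega,
              show j+s+1-(j+1) = s from by omega, show j+s+1-j = s+1 from by omega,
              step_term q z j s]
          rw [Finset.sum_congr rfl hj, h0, hDdK, Finset.sum_add_distrib]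
          ring
        rw [hdiff]
        ring
    calc Pz q z (N+1) = Pz q z N * (1 + z*q^(N+1)) := Pz_succ q z N
      _ = (1 + ∑ m ∈ Finset.range N, Tt q z m N) * (1 + z*q^(N+1)) := by rw [← ih]
      _ = 1 + ∑ m ∈ Finset.range (N+1), Tt q z m (N+1) := by rw [hstep]; ring

lemma norm_prod_one_add_sub_one_le (f : ℕ → ℂ) (F : Finset ℕ) :
    ‖(∏ i ∈ F, (1 + f i)) - 1‖ ≤ (∏ i ∈ F, (1 + ‖f i‖)) - 1 := by
  classical
  induction F using Finset.induction_on with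
  | empty => simp
  | insert a F' hx ih =>
    rw [Finset.prod_insert hx, Finset.prod_insert hx]
    have hnorm : ‖∏ i ∈ F', (1 + f i)‖ ≤ ∏ i ∈ F', (1 + ‖f i‖) := by
      calc ‖∏ i ∈ F', (1 + f i)‖ = ∏ i ∈ F', ‖1 + f i‖ := by
            rw [norm_prod]
        _ ≤ ∏ i ∈ F', (1 + ‖f i‖) := by
            apply Finset.prod_le_prod (fun i _ => norm_nonneg _)
            intro i _
            calc ‖1 + f i‖ ≤ ‖(1:ℂ)‖ + ‖f i‖ := norm_add_le _ _
              _ = 1 + ‖f i‖ := by rw [norm_one]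
    have key : (1 + f a) * (∏ i ∈ F', (1 + f i)) - 1
        = ((∏ i ∈ F', (1 + f i)) - 1) + f a * ∏ i ∈ F', (1 + f i) := by ring
    rw [key]
    calc ‖((∏ i ∈ F', (1 + f i)) - 1) + f a * ∏ i ∈ F', (1 + f i)‖
        ≤ ‖(∏ i ∈ F', (1 + f i)) - 1‖ + ‖f a * ∏ i ∈ F', (1 + f i)‖ := norm_add_le _ _
      _ ≤ ((∏ i ∈ F', (1 + ‖f i‖)) - 1) + ‖f a‖ * ∏ i ∈ F', (1 + ‖f i‖) := by
          apply add_le_add ih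
          rw [norm_mul]
          exact mul_le_mul_of_nonneg_left hnorm (norm_nonneg _)
      _ = (1 + ‖f a‖) * (∏ i ∈ F', (1 + ‖f i‖)) - 1 := by ring

lemma prod_one_add_le_exp (g : ℕ → ℝ) (hg : ∀ i, 0 ≤ g i) (F : Finset ℕ) :
    ∏ i ∈ F, (1 + g i) ≤ Real.exp (∑ i ∈ F, g i) := by
  rw [Real.exp_sum]
  apply Finset.prod_le_prod (fun i _ => by have := hg i; linarith)
  intro i _
  have := Real.add_one_le_exp (g i)
  linarith

lemma hasProd_one_add (f : ℕ → ℂ) (hf : Summable fun i => ‖f i‖) (L : ℂ)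
    (hL : Filter.Tendsto (fun N => ∏ i ∈ Finset.range N, (1 + f i)) Filter.atTop (nhds L)) :
    HasProd (fun i => 1 + f i) L := by
  classical
  rw [HasProd, Metric.tendsto_nhds]
  intro ε hε
  set C : ℝ := ‖L‖ + 1 with hC
  have hCpos : 0 < C := by positivity
  set δ : ℝ := Real.log (1 + ε/(4*C)) with hδ
  have hδargpos : 0 < 1 + ε/(4*C) := by positivity
  have hexpδ : Real.exp δ - 1 = ε/(4*C) := by
    rw [hδ, Real.exp_log hδargpos]; ring
  -- choose N₁ for partial products close to L
  obtain ⟨N₁, hN₁⟩ := (Metric.tendsto_atTop.1 hL) (min (ε/2) 1) (lt_min (by positivity) one_pos)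
  -- choose N₂ for small tails
  have htail := tendsto_sum_nat_add (fun i => ‖f i‖)
  obtain ⟨N₂, hN₂⟩ := (Metric.tendsto_atTop.1 htail) δ (by
    rw [hδ]; exact Real.log_pos (by
      have : 0 < ε/(4*C) := by positivity
      linarith))
  obtain ⟨N, hNa, hNb⟩ : ∃ N, N₁ ≤ N ∧ N₂ ≤ N := ⟨max N₁ N₂, le_max_left _ _, le_max_right _ _⟩
  change ∀ᶠ x in (atTop : Filter (Finset ℕ)), _
  rw [Filter.eventually_atTop]
  refine ⟨Finset.range N, fun F hF => ?_⟩
  have hPN : dist (∏ i ∈ Finset.range N, (1 + f i)) L < min (ε/2) 1 :=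
    hN₁ N hNa
  have hPNnorm : ‖∏ i ∈ Finset.range N, (1 + f i)‖ ≤ C := by
    have h1 : ‖∏ i ∈ Finset.range N, (1 + f i)‖ - ‖L‖ ≤ ‖(∏ i ∈ Finset.range N, (1 + f i)) - L‖ :=
      norm_sub_norm_le _ _
    have h2 : ‖(∏ i ∈ Finset.range N, (1 + f i)) - L‖ < 1 :=
      lt_of_lt_of_le (by rw [← dist_eq_norm]; exact hPN) (min_le_right _ _)
    rw [hC]; linarith
  -- tail bound
  have htails : ∑ i ∈ F \ Finset.range N, ‖f i‖ < δ := by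
    have himg : ∑ i ∈ F \ Finset.range N, ‖f i‖
        = ∑ j ∈ (F \ Finset.range N).image (· - N), ‖f (j + N)‖ := by
      rw [Finset.sum_image]
      · apply Finset.sum_congr rfl
        intro i hi
        have hNi : N ≤ i := by
          have := Finset.mem_sdiff.1 hi
          simpa [Finset.mem_range, not_lt] using this.2
        have h2 : i - N + N = i := by omega
        rw [h2]
      · intro a ha b hb hab
        have ha' : N ≤ a := by
          have := Finset.mem_sdiff.1 ha
          simpa [Finset.mem_range, not_lt] using this.2
        have hb' : N ≤ b := by
          have := Finset.mem_sdiff.1 hb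
          simpa [Finset.mem_range, not_lt] using this.2
        simp only at hab
        omega
    have hsum' : Summable (fun j => ‖f (j + N)‖) := (summable_nat_add_iff N).2 hf
    have hle : ∑ j ∈ (F \ Finset.range N).image (· - N), ‖f (j + N)‖
        ≤ ∑' j, ‖f (j + N)‖ := Summable.sum_le_tsum _ (fun i _ => norm_nonneg _) hsum'
    have htailN : ∑' j, ‖f (j + N)‖ < δ := by
      have := hN₂ N hNb
      rw [Real.dist_eq] at this
      have hnn : 0 ≤ ∑' j, ‖f (j + N)‖ := tsum_nonneg (fun _ => norm_nonneg _)
      rw [abs_of_nonneg (by linarith)] at this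
      linarith
    rw [himg]; linarith
  -- split the product
  have hsub : Finset.range N ⊆ F := hF
  have hprod : (∏ i ∈ F, (1 + f i))
      = (∏ i ∈ Finset.range N, (1 + f i)) * ∏ i ∈ F \ Finset.range N, (1 + f i) := by
    rw [mul_comm, Finset.prod_sdiff hsub]
  have hdiffbound : ‖(∏ i ∈ F \ Finset.range N, (1 + f i)) - 1‖ ≤ ε/(4*C) := by
    calc ‖(∏ i ∈ F \ Finset.range N, (1 + f i)) - 1‖
        ≤ (∏ i ∈ F \ Finset.range N, (1 + ‖f i‖)) - 1 := norm_prod_one_add_sub_one_le f _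
      _ ≤ Real.exp (∑ i ∈ F \ Finset.range N, ‖f i‖) - 1 := by
          have := prod_one_add_le_exp (fun i => ‖f i‖) (fun i => norm_nonneg _) (F \ Finset.range N)
          linarith
      _ ≤ Real.exp δ - 1 := by
          have := Real.exp_le_exp.2 (le_of_lt htails)
          linarith
      _ = ε/(4*C) := hexpδ
  rw [dist_eq_norm]
  have hdec : (∏ i ∈ F, (1 + f i)) - L
      = (∏ i ∈ Finset.range N, (1 + f i)) * ((∏ i ∈ F \ Finset.range N, (1 + f i)) - 1)
        + ((∏ i ∈ Finset.range N, (1 + f i)) - L) := by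
    rw [hprod]; ring
  rw [hdec]
  calc ‖_ + _‖ ≤ ‖(∏ i ∈ Finset.range N, (1 + f i)) * ((∏ i ∈ F \ Finset.range N, (1 + f i)) - 1)‖
        + ‖(∏ i ∈ Finset.range N, (1 + f i)) - L‖ := norm_add_le _ _
    _ ≤ C * (ε/(4*C)) + ε/2 := by
        gcongr
        · rw [norm_mul]
          have h1 : ‖(∏ i ∈ Finset.range N, (1 + f i))‖ * ‖(∏ i ∈ F \ Finset.range N, (1 + f i)) - 1‖
              ≤ C * (ε/(4*C)) := by
            apply mul_le_mul hPNnorm hdiffbound (norm_nonneg _) (le_of_lt hCpos)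
          exact h1
        · have := lt_of_lt_of_le hPN (min_le_left _ _)
          rw [dist_eq_norm] at this
          exact le_of_lt this
    _ < ε := by
        have h4 : C * (ε / (4 * C)) = ε / 4 := by
          field_simp
        rw [h4]; linarith

section Analytic

variable {q z : ℂ}

lemma hqnorm (hq : ‖q‖ < 1) : ‖q‖ < 1 := by exact hq

lemma qpow_ne_one (hq : ‖q‖ < 1) (i : ℕ) : q^(i+1) ≠ 1 := by
  intro h
  have h1 : ‖q^(i+1)‖ < 1 := by
    rw [norm_pow]
    exact pow_lt_one₀ (norm_nonneg q) (hqnorm hq) (by omega)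
  rw [h, norm_one] at h1
  exact lt_irrefl 1 h1

lemma Dz_ne_zero (hq : ‖q‖ < 1) (m : ℕ) : Dz q m ≠ 0 := by
  rw [Dz, Finset.prod_ne_zero_iff]
  intro i _
  exact sub_ne_zero.2 (Ne.symm (qpow_ne_one hq i))

lemma Dz_succ (q : ℂ) (m : ℕ) : Dz q (m+1) = Dz q m * (1 - q^(m+1)) :=
  Finset.prod_range_succ _ _

lemma Dz_norm_pos (hq : ‖q‖ < 1) (m : ℕ) : 0 < ‖Dz q m‖ :=
  norm_pos_iff.2 (Dz_ne_zero hq m)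

lemma qb_formula (hq : ‖q‖ < 1) {n m : ℕ} (h : m ≤ n) :
    qb q n m = (∏ i ∈ Finset.range m, (1 - q^(n-m+1+i))) / Dz q m := by
  rw [eq_div_iff (Dz_ne_zero hq m)]
  have := qb_mul q (n - m) m
  rwa [show m + (n - m) = n from by omega] at this

lemma qb_tendsto (hq : ‖q‖ < 1) (m : ℕ) :
    Filter.Tendsto (fun n => qb q n m) Filter.atTop (nhds ((Dz q m)⁻¹)) := by
  have hnum : Filter.Tendsto (fun n : ℕ => ∏ i ∈ Finset.range m, (1 - q^(n-m+1+i)))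
      Filter.atTop (nhds (∏ _i ∈ Finset.range m, (1:ℂ))) := by
    apply tendsto_finset_prod
    intro i _
    have h2 : Filter.Tendsto (fun t : ℕ => q^t) Filter.atTop (nhds 0) :=
      tendsto_pow_atTop_nhds_zero_of_norm_lt_one (hqnorm hq)
    have h3 : Filter.Tendsto (fun n : ℕ => n - m + 1 + i) Filter.atTop Filter.atTop :=
      tendsto_atTop_mono (fun n => by omega) (tendsto_sub_atTop_nat m)
    have h1 : Filter.Tendsto (fun n : ℕ => q^(n-m+1+i)) Filter.atTop (nhds 0) := h2.comp h3
    have h4 : Filter.Tendsto (fun _ : ℕ => (1:ℂ)) Filter.atTop (nhds 1) := tendsto_const_nhds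
    have := h4.sub h1
    simpa using this
  simp only [Finset.prod_const_one] at hnum
  have hdiv := hnum.div_const (Dz q m)
  rw [one_div] at hdiv
  apply hdiv.congr'
  rw [Filter.EventuallyEq, Filter.eventually_atTop]
  exact ⟨m, fun n hn => (qb_formula hq hn).symm⟩

lemma qb_norm_le (hq : ‖q‖ < 1) (n m : ℕ) :
    ‖qb q n m‖ ≤ 2^m / ‖Dz q m‖ := by
  rcases lt_or_ge n m with h | h
  · rw [qb_eq_zero q n m h, norm_zero]
    positivity
  · rw [qb_formula hq h, norm_div]
    have hnum : ‖∏ i ∈ Finset.range m, (1 - q^(n-m+1+i))‖ ≤ 2^m := by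
      rw [norm_prod]
      calc ∏ i ∈ Finset.range m, ‖1 - q^(n-m+1+i)‖
          ≤ ∏ _i ∈ Finset.range m, (2:ℝ) := by
            apply Finset.prod_le_prod (fun i _ => norm_nonneg _)
            intro i _
            calc ‖1 - q^(n-m+1+i)‖ ≤ ‖(1:ℂ)‖ + ‖q^(n-m+1+i)‖ := norm_sub_le _ _
              _ = 1 + ‖q‖^(n-m+1+i) := by rw [norm_one, norm_pow]
              _ ≤ 1 + 1 := by
                  gcongr
                  exact pow_le_one₀ (norm_nonneg q) (le_of_lt (hqnorm hq))
              _ = 2 := by norm_num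
        _ = 2^m := by rw [Finset.prod_const, Finset.card_range]
    apply div_le_div_of_nonneg_right hnum (le_of_lt (Dz_norm_pos hq m))

lemma Pz_norm_le (hq : ‖q‖ < 1) (z : ℂ) (m : ℕ) :
    ‖Pz q z m‖ ≤ (1+‖z‖)^m := by
  rw [Pz, norm_prod]
  calc ∏ i ∈ Finset.range m, ‖1 + z*q^(i+1)‖
      ≤ ∏ _i ∈ Finset.range m, (1+‖z‖) := by
        apply Finset.prod_le_prod (fun i _ => norm_nonneg _)
        intro i _
        calc ‖1 + z*q^(i+1)‖ ≤ ‖(1:ℂ)‖ + ‖z*q^(i+1)‖ := norm_add_le _ _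
          _ = 1 + ‖z‖*‖q‖^(i+1) := by rw [norm_one, norm_mul, norm_pow]
          _ ≤ 1 + ‖z‖*1 := by
              gcongr
              exact pow_le_one₀ (norm_nonneg q) (le_of_lt (hqnorm hq))
          _ = 1 + ‖z‖ := by ring
    _ = (1+‖z‖)^m := by rw [Finset.prod_const, Finset.card_range]

end Analytic

section Final

variable {q z : ℂ}

/-- ratio-test helper -/
lemma summable_helper (hq : ‖q‖ < 1) (u : ℕ → ℝ) (hu : ∀ m, 0 ≤ u m)
    (C : ℝ) (hC : 0 ≤ C) (hrec : ∀ m, u (m+1) ≤ C * ‖q‖^(3*m+4) * u m) : Summable u := by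
  apply summable_of_ratio_norm_eventually_le (r := 1/2) (by norm_num)
  have hpow : Filter.Tendsto (fun m : ℕ => ‖q‖^(3*m+4)) Filter.atTop (nhds 0) := by
    have h1 : Filter.Tendsto (fun t : ℕ => ‖q‖^t) Filter.atTop (nhds 0) :=
      tendsto_pow_atTop_nhds_zero_of_lt_one (norm_nonneg q) (hqnorm hq)
    exact h1.comp (tendsto_atTop_mono (fun m => by simp only [id_eq]; omega) tendsto_id)
  have hq3 : Filter.Tendsto (fun m : ℕ => C * ‖q‖^(3*m+4)) Filter.atTop (nhds 0) := by
    have := hpow.const_mul C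
    simpa using this
  filter_upwards [hq3.eventually_lt_const (show (0:ℝ) < 1/2 by norm_num)] with m hm
  rw [Real.norm_eq_abs, Real.norm_eq_abs, abs_of_nonneg (hu _), abs_of_nonneg (hu _)]
  calc u (m+1) ≤ C * ‖q‖^(3*m+4) * u m := hrec m
    _ ≤ (1/2) * u m := mul_le_mul_of_nonneg_right (le_of_lt hm) (hu m)

theorem sylvester_identity (q z : ℂ) (hq : ‖q‖ < 1) :
    (∏' i : ℕ, (1 + z * q ^ (i + 1))) =
      1 + ∑' m : ℕ,
        (((∏ i ∈ Finset.range m, (1 + z * q ^ (i + 1))) /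
            (∏ i ∈ Finset.range m, (1 - q ^ (i + 1)))) *
          z ^ (m + 1) * q ^ ((m + 1) * (3 * (m + 1) - 1) / 2) +
        ((∏ i ∈ Finset.range (m + 1), (1 + z * q ^ (i + 1))) /
            (∏ i ∈ Finset.range (m + 1), (1 - q ^ (i + 1)))) *
          z ^ (m + 1) * q ^ ((m + 1) * (3 * (m + 1) + 1) / 2)) := by
  have hqn : ‖q‖ < 1 := hqnorm hq
  have hqle : ‖q‖ ≤ 1 := le_of_lt hqn
  -- the limit family
  set g : ℕ → ℂ := fun m =>
    Pz q z m * (Dz q m)⁻¹ * z^(m+1) * q^(e1 m)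
      + Pz q z (m+1) * (Dz q (m+1))⁻¹ * z^(m+1) * q^(e2 m) with hg
  -- bounds
  set B1 : ℕ → ℝ := fun m =>
    ((1+‖z‖)^m * 2^m * ‖z‖^(m+1) * ‖q‖^(e1 m)) / ‖Dz q m‖ with hB1
  set B2 : ℕ → ℝ := fun m =>
    ((1+‖z‖)^(m+1) * 2^(m+1) * ‖z‖^(m+1) * ‖q‖^(e2 m)) / ‖Dz q (m+1)‖ with hB2
  have hB1nonneg : ∀ m, 0 ≤ B1 m := fun m => by
    rw [hB1]; positivity
  have hB2nonneg : ∀ m, 0 ≤ B2 m := fun m => by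
    rw [hB2]; positivity
  set C : ℝ := 2*(1+‖z‖)^2 / (1-‖q‖) with hCdef
  have hone_sub : 0 < 1 - ‖q‖ := by linarith
  have hCnonneg : 0 ≤ C := by
    rw [hCdef]
    exact div_nonneg (by positivity) (le_of_lt hone_sub)
  have hDnormsucc : ∀ m, (1-‖q‖) * ‖Dz q m‖ ≤ ‖Dz q (m+1)‖ := by
    intro m
    rw [Dz_succ, norm_mul]
    rw [mul_comm]
    apply mul_le_mul_of_nonneg_left ?_ (norm_nonneg _)
    calc 1 - ‖q‖ ≤ 1 - ‖q‖^(m+1) := by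
          have : ‖q‖^(m+1) ≤ ‖q‖ := by
            calc ‖q‖^(m+1) ≤ ‖q‖^1 := pow_le_pow_of_le_one (norm_nonneg q) hqle (by omega)
              _ = ‖q‖ := pow_one _
          linarith
      _ ≤ ‖1 - q^(m+1)‖ := by
          have h1 : ‖(1:ℂ)‖ - ‖q^(m+1)‖ ≤ ‖1 - q^(m+1)‖ := norm_sub_norm_le _ _
          rw [norm_one, norm_pow] at h1
          exact h1
  have hrec1 : ∀ m, B1 (m+1) ≤ C * ‖q‖^(3*m+4) * B1 m := by
    intro m
    have hrw : C * ‖q‖^(3*m+4) * B1 m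
        = (2*(1+‖z‖)^2 * ‖q‖^(3*m+4) * ((1+‖z‖)^m * 2^m * ‖z‖^(m+1) * ‖q‖^(e1 m)))
          / ((1-‖q‖) * ‖Dz q m‖) := by
      rw [hB1, hCdef]
      field_simp
      try ring
    rw [hrw, hB1]
    simp only
    rw [show e1 (m+1) = e1 m + (3*m+4) from rfl]
    apply div_le_div₀ (by positivity) ?_ (mul_pos hone_sub (Dz_norm_pos hq m)) (hDnormsucc m)
    have h1 : (1+‖z‖)^(m+1) * 2^(m+1) * ‖z‖^(m+1+1) * ‖q‖^(e1 m + (3*m+4))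
        = ((1+‖z‖)^m * 2^m * ‖z‖^(m+1) * ‖q‖^(e1 m + (3*m+4))) * (2*(1+‖z‖)*‖z‖) := by ring
    have h2 : 2*(1+‖z‖)^2 * ‖q‖^(3*m+4) * ((1+‖z‖)^m * 2^m * ‖z‖^(m+1) * ‖q‖^(e1 m))
        = ((1+‖z‖)^m * 2^m * ‖z‖^(m+1) * ‖q‖^(e1 m + (3*m+4))) * (2*(1+‖z‖)*(1+‖z‖)) := by
      rw [pow_add]; ring
    rw [h1, h2]
    apply mul_le_mul_of_nonneg_left ?_ (by positivity)
    have hz1 : ‖z‖ ≤ 1 + ‖z‖ := by linarith [norm_nonneg z]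
    apply mul_le_mul_of_nonneg_left hz1 (by positivity)
  have hrec2 : ∀ m, B2 (m+1) ≤ C * ‖q‖^(3*m+4) * B2 m := by
    intro m
    have hrw : C * ‖q‖^(3*m+4) * B2 m
        = (2*(1+‖z‖)^2 * ‖q‖^(3*m+4) * ((1+‖z‖)^(m+1) * 2^(m+1) * ‖z‖^(m+1) * ‖q‖^(e2 m)))
          / ((1-‖q‖) * ‖Dz q (m+1)‖) := by
      rw [hB2, hCdef]
      field_simp
      try ring
    rw [hrw, hB2]
    simp only
    rw [show e2 (m+1) = e2 m + (3*m+5) from rfl]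
    apply div_le_div₀ (by positivity) ?_ (mul_pos hone_sub (Dz_norm_pos hq (m+1))) (hDnormsucc (m+1))
    have h1 : (1+‖z‖)^(m+1+1) * 2^(m+1+1) * ‖z‖^(m+1+1) * ‖q‖^(e2 m + (3*m+5))
        = ((1+‖z‖)^(m+1) * 2^(m+1) * ‖z‖^(m+1) * ‖q‖^(e2 m + (3*m+4))) * (2*(1+‖z‖)*(‖z‖*‖q‖)) := by
      rw [show e2 m + (3*m+5) = (e2 m + (3*m+4)) + 1 from by omega, pow_add]
      ring
    have h2 : 2*(1+‖z‖)^2 * ‖q‖^(3*m+4) * ((1+‖z‖)^(m+1) * 2^(m+1) * ‖z‖^(m+1) * ‖q‖^(e2 m))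
        = ((1+‖z‖)^(m+1) * 2^(m+1) * ‖z‖^(m+1) * ‖q‖^(e2 m + (3*m+4))) * (2*(1+‖z‖)*(1+‖z‖)) := by
      rw [pow_add]; ring
    rw [h1, h2]
    apply mul_le_mul_of_nonneg_left ?_ (by positivity)
    have hzq : ‖z‖*‖q‖ ≤ 1 + ‖z‖ := by
      have h3 : ‖z‖*‖q‖ ≤ ‖z‖*1 := mul_le_mul_of_nonneg_left hqle (norm_nonneg z)
      have := norm_nonneg z
      linarith
    apply mul_le_mul_of_nonneg_left hzq (by positivity)
  have hB1sum : Summable B1 := summable_helper hq B1 hB1nonneg C hCnonneg hrec1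
  have hB2sum : Summable B2 := summable_helper hq B2 hB2nonneg C hCnonneg hrec2
  have hBsum : Summable (fun m => B1 m + B2 m) := hB1sum.add hB2sum
  -- bound on the terms
  have hbound : ∀ N m, ‖Tt q z m N‖ ≤ B1 m + B2 m := by
    intro N m
    rw [Tt]
    calc ‖Pz q z m * qb q (N-(m+1)) m * z^(m+1) * q^(e1 m)
          + Pz q z (m+1) * qb q (N-(m+1)) (m+1) * z^(m+1) * q^(e2 m)‖
        ≤ ‖Pz q z m * qb q (N-(m+1)) m * z^(m+1) * q^(e1 m)‖
          + ‖Pz q z (m+1) * qb q (N-(m+1)) (m+1) * z^(m+1) * q^(e2 m)‖ := norm_add_le _ _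
      _ ≤ B1 m + B2 m := by
          apply add_le_add
          · rw [norm_mul, norm_mul, norm_mul, norm_pow, norm_pow, hB1]
            simp only
            rw [div_eq_mul_inv, mul_comm ((1+‖z‖)^m * 2^m * ‖z‖^(m+1) * ‖q‖^(e1 m)) _]
            rw [mul_comm (‖Dz q m‖)⁻¹ _]
            rw [mul_comm ((1+‖z‖)^m) (2^m)]
            calc ‖Pz q z m‖ * ‖qb q (N-(m+1)) m‖ * ‖z‖^(m+1) * ‖q‖^(e1 m)
                ≤ (1+‖z‖)^m * (2^m/‖Dz q m‖) * ‖z‖^(m+1) * ‖q‖^(e1 m) := by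
                  gcongr
                  · exact Pz_norm_le hq z m
                  · exact qb_norm_le hq _ m
              _ = 2^m * (1+‖z‖)^m * ‖z‖^(m+1) * ‖q‖^(e1 m) * (‖Dz q m‖)⁻¹ := by
                  field_simp
                  try ring
          · rw [norm_mul, norm_mul, norm_mul, norm_pow, norm_pow, hB2]
            simp only
            calc ‖Pz q z (m+1)‖ * ‖qb q (N-(m+1)) (m+1)‖ * ‖z‖^(m+1) * ‖q‖^(e2 m)
                ≤ (1+‖z‖)^(m+1) * (2^(m+1)/‖Dz q (m+1)‖) * ‖z‖^(m+1) * ‖q‖^(e2 m) := by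
                  gcongr
                  · exact Pz_norm_le hq z (m+1)
                  · exact qb_norm_le hq _ (m+1)
              _ = ((1+‖z‖)^(m+1) * 2^(m+1) * ‖z‖^(m+1) * ‖q‖^(e2 m)) / ‖Dz q (m+1)‖ := by
                  field_simp
                  try ring
  -- pointwise convergence
  have hTt_tendsto : ∀ m, Filter.Tendsto (fun N => Tt q z m N) Filter.atTop (nhds (g m)) := by
    intro m
    have hsub : Filter.Tendsto (fun N : ℕ => N - (m+1)) Filter.atTop Filter.atTop :=
      tendsto_sub_atTop_nat (m+1)
    have hqb1 : Filter.Tendsto (fun N => qb q (N-(m+1)) m) Filter.atTop (nhds ((Dz q m)⁻¹)) :=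
      (qb_tendsto hq m).comp hsub
    have hqb2 : Filter.Tendsto (fun N => qb q (N-(m+1)) (m+1)) Filter.atTop
        (nhds ((Dz q (m+1))⁻¹)) := (qb_tendsto hq (m+1)).comp hsub
    have t1 : Filter.Tendsto (fun N => Pz q z m * qb q (N-(m+1)) m * z^(m+1) * q^(e1 m))
        Filter.atTop (nhds (Pz q z m * (Dz q m)⁻¹ * z^(m+1) * q^(e1 m))) :=
      ((hqb1.const_mul (Pz q z m)).mul_const (z^(m+1))).mul_const (q^(e1 m))
    have t2 : Filter.Tendsto (fun N => Pz q z (m+1) * qb q (N-(m+1)) (m+1) * z^(m+1) * q^(e2 m))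
        Filter.atTop (nhds (Pz q z (m+1) * (Dz q (m+1))⁻¹ * z^(m+1) * q^(e2 m))) :=
      ((hqb2.const_mul (Pz q z (m+1))).mul_const (z^(m+1))).mul_const (q^(e2 m))
    exact t1.add t2
  -- Tannery
  have hTan : Filter.Tendsto (fun N => ∑' m, Tt q z m N) Filter.atTop (nhds (∑' m, g m)) :=
    tendsto_tsum_of_dominated_convergence hBsum hTt_tendsto
      (Filter.Eventually.of_forall (fun N m => hbound N m))
  -- partial sums agree with tsum for N ≥ 1
  have hpartial : ∀ N : ℕ, 1 ≤ N → (∑' m, Tt q z m N) = ∑ m ∈ Finset.range N, Tt q z m N := by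
    intro N hN
    apply tsum_eq_sum
    intro m hm
    rw [Finset.mem_range, not_lt] at hm
    rw [Tt, show N - (m+1) = 0 from by omega]
    rw [qb_eq_zero q 0 m (by omega), qb_eq_zero q 0 (m+1) (by omega)]
    ring
  have hsums : Filter.Tendsto (fun N => ∑ m ∈ Finset.range N, Tt q z m N) Filter.atTop
      (nhds (∑' m, g m)) := by
    apply hTan.congr'
    rw [Filter.EventuallyEq, Filter.eventually_atTop]
    exact ⟨1, fun N hN => hpartial N hN⟩
  -- partial products converge
  have hprod : Filter.Tendsto (fun N => Pz q z N) Filter.atTop (nhds (1 + ∑' m, g m)) := by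
    have h1 : Filter.Tendsto (fun N => 1 + ∑ m ∈ Finset.range N, Tt q z m N) Filter.atTop
        (nhds (1 + ∑' m, g m)) := tendsto_const_nhds.add hsums
    exact h1.congr (fun N => (finite_syl q z N).symm)
  -- summability of the factors
  have hfsum : Summable (fun i : ℕ => ‖z * q^(i+1)‖) := by
    have h1 : Summable (fun i : ℕ => (‖z‖*‖q‖) * ‖q‖^i) :=
      (summable_geometric_of_lt_one (norm_nonneg q) hqn).mul_left _
    apply h1.congr
    intro i
    rw [norm_mul, norm_pow, pow_succ]
    ring
  have hProd : HasProd (fun i : ℕ => 1 + z * q^(i+1)) (1 + ∑' m, g m) :=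
    hasProd_one_add _ hfsum _ hprod
  rw [hProd.tprod_eq]
  congr 1
  apply tsum_congr
  intro m
  rw [hg]
  simp only
  rw [e1_spec, e2_spec, Pz, Pz, Dz, Dz, div_eq_mul_inv, div_eq_mul_inv]

end Final
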